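/- Let V be a finite-dimensional representation of a finite group G over F_q satisfying the following assumption: there is an involution g ↦ g^ι of G and a non-degenerate symmetric bilinear form b : V × V → F_q with b(gx, g^ι y) = b(x,y) for all x,y ∈ V and g ∈ G. Identify V with its dual via b, let O_1, …, O_r be the G-orbits on V, let e_i be the indicator function of O_i, and define the Fourier transform \hatφ(y) = |V|^{-1} Σ_{x∈V} φ(x) exp(2π√(-1) · Tr_{F_q/F_p}(b(x,y))/p). Then for every F_q-subspace W of V, with W^⊥ = {y ∈ V : b(x,y) = 0 for all x ∈ W}, one has Σ_{i=1}^{r} (|O_i ∩ W|/|O_i|) · \hat{e_i} = (|W|/|V|) · Σ_{i=1}^{r} (|O_i ∩ W^⊥|/|O_i|) · e_i as functions on V. -/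

import Mathlib

open scoped Classical

noncomputable section

/-- The standard additive character `t ↦ exp(2πi·Tr_{F/F_p}(t)/p)` of a finite field `F`
of characteristic `p`. -/
def psiF (p : ℕ) [Fact p.Prime] (F : Type*) [Field F] [Fintype F] [CharP F p] (t : F) : ℂ :=
  letI : Algebra (ZMod p) F := ZMod.algebra F p
  Complex.exp (2 * Real.pi * Complex.I * ((Algebra.trace (ZMod p) F t).val : ℂ) / (p : ℂ))

/-- The Fourier transform attached to a bilinear form `b` on a finite `F`-vector space `V`:
`\hatφ(y) = |V|⁻¹ ∑_x φ(x) exp(2πi·Tr(b(x,y))/p)`. -/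
def FTgen {F : Type*} [Field F] [Fintype F] (p : ℕ) [Fact p.Prime] [CharP F p]
    {V : Type*} [AddCommGroup V] [Module F V] [Fintype V]
    (b : V →ₗ[F] V →ₗ[F] F) (φ : V → ℂ) (y : V) : ℂ :=
  (Fintype.card V : ℂ)⁻¹ * ∑ x : V, φ x * psiF p F (b x y)


section psi
variable (p : ℕ) [Fact p.Prime] (F : Type*) [Field F] [Fintype F] [CharP F p]

lemma zetapow : (Complex.exp (2 * Real.pi * Complex.I / p)) ^ p = 1 :=
  (Complex.isPrimitiveRoot_exp p (Fact.out : p.Prime).ne_zero).pow_eq_one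

def psiChar : AddChar F ℂ :=
  letI : Algebra (ZMod p) F := ZMod.algebra F p
  (AddChar.zmodChar p (zetapow p)).compAddMonoidHom
    (letI := ZMod.algebra F p; (Algebra.trace (ZMod p) F).toAddMonoidHom)

lemma psiChar_apply (t : F) : psiChar p F t = psiF p F t := by
  letI : Algebra (ZMod p) F := ZMod.algebra F p
  have hp : (p : ℂ) ≠ 0 := Nat.cast_ne_zero.mpr (Fact.out : p.Prime).ne_zero
  simp only [psiChar, psiF, AddChar.compAddMonoidHom_apply, LinearMap.toAddMonoidHom_coe,
    AddChar.zmodChar_apply]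
  rw [← Complex.exp_nat_mul]
  congr 1
  push_cast
  field_simp

lemma psiChar_ne_one : psiChar p F ≠ 1 := by
  letI : Algebra (ZMod p) F := ZMod.algebra F p
  haveI : Module.Finite (ZMod p) F := Module.Finite.of_finite
  obtain ⟨t, ht⟩ := Algebra.trace_surjective (ZMod p) F 1
  rw [AddChar.ne_one_iff]
  refine ⟨t, ?_⟩
  simp only [psiChar, AddChar.compAddMonoidHom_apply, LinearMap.toAddMonoidHom_coe,
    AddChar.zmodChar_apply, ht]
  have h1 : ((1 : ZMod p)).val = 1 := ZMod.val_one p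
  rw [h1, pow_one]
  exact (Complex.isPrimitiveRoot_exp p (Fact.out : p.Prime).ne_zero).ne_one
    (Fact.out : p.Prime).one_lt

end psi

section sub
variable (p : ℕ) [Fact p.Prime] {F : Type*} [Field F] [Fintype F] [CharP F p]
variable {V : Type*} [AddCommGroup V] [Module F V] [Fintype V]

lemma psiF_zero : psiF p F 0 = 1 := by
  rw [← psiChar_apply]; exact AddChar.map_zero_eq_one _

lemma sum_psi_subspace (b : V →ₗ[F] V →ₗ[F] F) (W : Submodule F V) (u : V) :
    ∑ x : V, (if x ∈ W then (1:ℂ) else 0) * psiF p F (b x u)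
      = if ∀ x ∈ W, b x u = 0 then (Nat.card W : ℂ) else 0 := by
  have hsub : ∑ x : V, (if x ∈ W then (1:ℂ) else 0) * psiF p F (b x u)
      = ∑ w : W, psiF p F (b w u) := by
    rw [← Finset.sum_subtype (Finset.univ.filter (· ∈ W))
      (by simp) (fun x => psiF p F (b x u)), Finset.sum_filter]
    exact Finset.sum_congr rfl fun x _ => by split <;> simp
  rw [hsub]
  by_cases h : ∀ x ∈ W, b x u = 0
  · rw [if_pos h, Finset.sum_congr rfl fun w _ => by rw [h w w.2, psiF_zero]]
    simp [Nat.card_eq_fintype_card]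
  · -- nontrivial character on W
    rw [if_neg h]
    push_neg at h
    obtain ⟨w0, hw0, hbw0⟩ := h
    set χ : AddChar W ℂ :=
      (psiChar p F).compAddMonoidHom (((b.flip u).comp W.subtype).toAddMonoidHom) with hχ
    have hχapp : ∀ w : W, χ w = psiF p F (b w u) := fun w => psiChar_apply p F _
    have hχne : χ ≠ 1 := by
      rw [AddChar.ne_one_iff]
      obtain ⟨t0, ht0⟩ := AddChar.ne_one_iff.mp (psiChar_ne_one p F)
      refine ⟨⟨(t0 / b w0 u) • w0, W.smul_mem _ hw0⟩, ?_⟩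
      have hb : b ((t0 / b w0 u) • w0) u = t0 := by
        rw [map_smul]; simp only [LinearMap.smul_apply, smul_eq_mul]
        exact div_mul_cancel₀ _ hbw0
      simp only [hχ, AddChar.compAddMonoidHom_apply, LinearMap.toAddMonoidHom_coe,
        LinearMap.comp_apply, LinearMap.flip_apply, Submodule.subtype_apply]
      rw [hb]; exact ht0
    calc ∑ w : W, psiF p F (b w u) = ∑ w : W, χ w :=
          Finset.sum_congr rfl fun w _ => (hχapp w).symm
      _ = 0 := AddChar.sum_eq_zero_of_ne_one hχne

end sub

section orbit
variable {G : Type*} [Group G] [Fintype G] {V : Type*} [Fintype V] [MulAction G V]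

lemma card_fiber (x y : V) (hy : y ∈ MulAction.orbit G x) :
    (Finset.univ.filter fun g : G => g • x = y).card
      = Nat.card (MulAction.stabilizer G x) := by
  obtain ⟨g0, rfl⟩ := hy
  rw [Nat.card_eq_fintype_card, Fintype.card_subtype]
  refine Finset.card_nbij' (fun g => g0⁻¹ * g) (fun g => g0 * g) ?_ ?_ ?_ ?_
  · intro g hg
    simp only [Finset.mem_coe, Finset.mem_filter, Finset.mem_univ, true_and] at hg ⊢
    rw [MulAction.mem_stabilizer_iff, mul_smul, hg, inv_smul_smul]
  · intro g hg
    simp only [Finset.mem_coe, Finset.mem_filter, Finset.mem_univ, true_and] at hg ⊢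
    rw [MulAction.mem_stabilizer_iff] at hg
    rw [mul_smul, hg]
  · intro g _; group
  · intro g _; group

lemma avg_indicator (x : V) (S : Set V) :
    (Nat.card ↥(MulAction.orbit G x ∩ S) : ℂ) / (Nat.card ↥(MulAction.orbit G x) : ℂ)
      = (Nat.card G : ℂ)⁻¹ * ∑ g : G, (if g • x ∈ S then (1:ℂ) else 0) := by
  classical
  have hsum : ∑ g : G, (if g • x ∈ S then (1:ℂ) else 0)
      = (Nat.card (MulAction.stabilizer G x) : ℂ)
        * (Nat.card ↥(MulAction.orbit G x ∩ S) : ℂ) := by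
    rw [← Finset.sum_fiberwise_of_maps_to (g := fun g : G => g • x)
      (t := (MulAction.orbit G x).toFinset)
      (fun g _ => by simp [MulAction.mem_orbit]) (fun g => if g • x ∈ S then (1:ℂ) else 0)]
    have : ∀ y ∈ (MulAction.orbit G x).toFinset,
        ∑ g ∈ Finset.univ.filter (fun g : G => g • x = y),
          (if g • x ∈ S then (1:ℂ) else 0)
        = (Nat.card (MulAction.stabilizer G x) : ℂ) * (if y ∈ S then (1:ℂ) else 0) := by
      intro y hy
      rw [Finset.sum_congr rfl (fun g hg => by
        rw [(Finset.mem_filter.mp hg).2]), Finset.sum_const,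
        card_fiber x y (Set.mem_toFinset.mp hy)]
      simp [mul_comm]
    rw [Finset.sum_congr rfl this, ← Finset.mul_sum]
    congr 1
    rw [Finset.sum_boole]
    congr 1
    have : (MulAction.orbit G x ∩ S).toFinset
        = (MulAction.orbit G x).toFinset.filter (· ∈ S) := by
      ext y; simp [Set.mem_toFinset]
    rw [Nat.card_eq_card_toFinset, this]
  rw [hsum]
  have horb : Nat.card ↥(MulAction.orbit G x) * Nat.card (MulAction.stabilizer G x)
      = Nat.card G := by
    simp only [Nat.card_eq_fintype_card]
    exact MulAction.card_orbit_mul_card_stabilizer_eq_card_group G x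
  haveI : Nonempty ↥(MulAction.orbit G x) := ⟨⟨x, MulAction.mem_orbit_self x⟩⟩
  have h1 : (Nat.card ↥(MulAction.orbit G x) : ℂ) ≠ 0 :=
    Nat.cast_ne_zero.mpr Nat.card_pos.ne'
  have h3 : (Nat.card (MulAction.stabilizer G x) : ℂ) ≠ 0 :=
    Nat.cast_ne_zero.mpr Nat.card_pos.ne'
  rw [← horb]
  push_cast
  rw [mul_inv, div_eq_mul_inv]
  field_simp

end orbit

/-- for any subspace `W`,
`∑ᵢ (|Oᵢ ∩ W|/|Oᵢ|)·ê_i = (|W|/|V|)·∑ᵢ (|Oᵢ ∩ W^⊥|/|Oᵢ|)·e_i`, formulated pointwise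
(at a point `z`, the sum `∑ᵢ cᵢ e_i` takes the value `c_{i(z)}` for the orbit of `z`). -/
theorem stmt3 {F : Type*} [Field F] [Fintype F] (p : ℕ) [Fact p.Prime] [CharP F p]
    {V : Type*} [AddCommGroup V] [Module F V] [Fintype V]
    {G : Type*} [Group G] [Finite G] [DistribMulAction G V] [SMulCommClass G F V]
    (ι : G → G) (hinv : Function.Involutive ι) (hhom : ∀ g h : G, ι (g * h) = ι g * ι h)
    (b : V →ₗ[F] V →ₗ[F] F)
    (hsymm : ∀ x y : V, b x y = b y x)
    (hnd : ∀ y : V, (∀ x : V, b x y = 0) → y = 0)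
    (hequiv : ∀ (g : G) (x y : V), b (g • x) (ι g • y) = b x y)
    (W : Submodule F V) (z : V) :
    FTgen p b (fun x => (Nat.card ↥(MulAction.orbit G x ∩ (W : Set V)) : ℂ) /
        (Nat.card ↥(MulAction.orbit G x) : ℂ)) z
      = ((Nat.card ↥W : ℂ) / (Fintype.card V : ℂ)) *
          ((Nat.card ↥(MulAction.orbit G z ∩ {y : V | ∀ x ∈ W, b x y = 0}) : ℂ) /
            (Nat.card ↥(MulAction.orbit G z) : ℂ)) := by
  classical
  letI : Fintype G := Fintype.ofFinite G
  set S : Set V := {y : V | ∀ x ∈ W, b x y = 0} with hS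
  -- basic facts about ι
  have hι1 : ι 1 = 1 := by
    have h := hhom 1 1
    rw [mul_one] at h
    exact (left_eq_mul.mp h)
  have hιinv : ∀ g : G, ι g⁻¹ = (ι g)⁻¹ := by
    intro g
    have h := hhom g g⁻¹
    rw [mul_inv_cancel, hι1] at h
    exact (inv_eq_of_mul_eq_one_right h.symm).symm
  have hkey : ∀ (g : G) (x : V), b (g⁻¹ • x) z = b x (ι g • z) := by
    intro g x
    have h := hequiv g⁻¹ x (ι g • z)
    rwa [smul_smul, hιinv, inv_mul_cancel, one_smul] at h
  have hN : (Nat.card G : ℂ) ≠ 0 := by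
    haveI : Nonempty G := One.instNonempty
    exact Nat.cast_ne_zero.mpr Nat.card_pos.ne'
  rw [FTgen]
  -- Step 1: expand the orbit-average as a group average
  have step1 : ∑ x : V,
      ((Nat.card ↥(MulAction.orbit G x ∩ (W : Set V)) : ℂ) /
        (Nat.card ↥(MulAction.orbit G x) : ℂ)) * psiF p F (b x z)
      = (Nat.card G : ℂ)⁻¹ * ∑ g : G, ∑ x : V,
          (if g • x ∈ (W : Set V) then (1:ℂ) else 0) * psiF p F (b x z) := by
    calc ∑ x : V, ((Nat.card ↥(MulAction.orbit G x ∩ (W : Set V)) : ℂ) /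
          (Nat.card ↥(MulAction.orbit G x) : ℂ)) * psiF p F (b x z)
        = ∑ x : V, (Nat.card G : ℂ)⁻¹ * ∑ g : G,
            (if g • x ∈ (W : Set V) then (1:ℂ) else 0) * psiF p F (b x z) := by
          refine Finset.sum_congr rfl fun x _ => ?_
          rw [avg_indicator x (W : Set V), mul_assoc, Finset.sum_mul]
      _ = (Nat.card G : ℂ)⁻¹ * ∑ x : V, ∑ g : G,
            (if g • x ∈ (W : Set V) then (1:ℂ) else 0) * psiF p F (b x z) := by
          rw [Finset.mul_sum]
      _ = _ := by rw [Finset.sum_comm]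
  -- Step 2: the inner sum is a subspace character sum
  have step2 : ∀ g : G, ∑ x : V,
      (if g • x ∈ (W : Set V) then (1:ℂ) else 0) * psiF p F (b x z)
      = if ι g • z ∈ S then (Nat.card W : ℂ) else 0 := by
    intro g
    have e1 : ∑ x : V, (if g • x ∈ (W : Set V) then (1:ℂ) else 0) * psiF p F (b x z)
        = ∑ x : V, (if x ∈ W then (1:ℂ) else 0) * psiF p F (b x (ι g • z)) := by
      rw [← Equiv.sum_comp (MulAction.toPerm g⁻¹ : Equiv.Perm V)
        (fun x => (if g • x ∈ (W : Set V) then (1:ℂ) else 0) * psiF p F (b x z))]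
      refine Finset.sum_congr rfl fun x _ => ?_
      simp only [MulAction.toPerm_apply, smul_inv_smul, hkey g, SetLike.mem_coe]
    rw [e1, sum_psi_subspace p b W (ι g • z)]
    congr 1
  rw [step1, Finset.sum_congr rfl fun g _ => step2 g]
  -- Step 3: reindex by the involution and recognize the orbit average
  have step3 : ∑ g : G, (if ι g • z ∈ S then (Nat.card W : ℂ) else 0)
      = (Nat.card W : ℂ) * ∑ g : G, (if g • z ∈ S then (1:ℂ) else 0) := by
    calc ∑ g : G, (if ι g • z ∈ S then (Nat.card W : ℂ) else 0)
        = ∑ g : G, (if g • z ∈ S then (Nat.card W : ℂ) else 0) :=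
          Fintype.sum_equiv (Function.Involutive.toPerm ι hinv) _ _ (fun g => rfl)
      _ = _ := by
          rw [Finset.mul_sum]
          exact Finset.sum_congr rfl fun g _ => by rw [mul_ite, mul_one, mul_zero]
  rw [step3]
  rw [avg_indicator z S, div_eq_mul_inv]
  ring


end
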